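/- arXiv:1905.07865 — 4 statements merged into one kernel-verified Lean document; each statement's English description precedes it below -/
import Mathlib

section
/- For matrices B₁ ∈ ℝ^{n×n} and B₂ ∈ ℝ^{n×k}, the two-to-infinity norm satisfies ‖B₁B₂‖_{2,∞} ≤ ‖B₁‖_∞ ‖B₂‖_{2,∞}, where ‖B₁‖_∞ is the maximum absolute row sum of B₁. -/
open Matrix

noncomputable def rnorm {k : ℕ} (v : Fin k → ℝ) : ℝ := Real.sqrt (∑ j, v j ^ 2)

/-- two-to-infinity norm: maximum Euclidean norm of the rows -/
noncomputable def twoInf {n k : ℕ} (B : Matrix (Fin n) (Fin k) ℝ) : ℝ := ⨆ i, rnorm (B i)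

/-- Frobenius norm -/
noncomputable def frob {n k : ℕ} (B : Matrix (Fin n) (Fin k) ℝ) : ℝ :=
  Real.sqrt (∑ i, ∑ j, B i j ^ 2)

/-- maximum absolute row-sum norm -/
noncomputable def rowSumNorm {n k : ℕ} (B : Matrix (Fin n) (Fin k) ℝ) : ℝ := ⨆ i, ∑ j, |B i j|

/-- spectral norm: operator norm induced by Euclidean vector norms -/
noncomputable def specNorm {m n : ℕ} (B : Matrix (Fin m) (Fin n) ℝ) : ℝ :=
  ‖(Matrix.toEuclideanLin B).toContinuousLinearMap‖

/-- vector sup norm -/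
noncomputable def vecInf {n : ℕ} (v : Fin n → ℝ) : ℝ := ⨆ i, |v i|

/-- smallest singular value, via σ_min(B) = inf over unit v of ‖vᵀB‖₂ -/
noncomputable def sigmaMin {l : ℕ} (B : Matrix (Fin l) (Fin l) ℝ) : ℝ :=
  ⨅ v : {v : Fin l → ℝ // rnorm v = 1}, rnorm (Matrix.vecMul v.1 B)

lemma rnorm_eq' {k : ℕ} (v : Fin k → ℝ) :
    rnorm v = ‖(WithLp.equiv 2 (Fin k → ℝ)).symm v‖ := by
  simp [rnorm, EuclideanSpace.norm_eq, Real.norm_eq_abs, sq_abs]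

lemma rnorm_nonneg' {k : ℕ} (v : Fin k → ℝ) : 0 ≤ rnorm v := Real.sqrt_nonneg _

theorem stmt2 {n k : ℕ} (B₁ : Matrix (Fin n) (Fin n) ℝ) (B₂ : Matrix (Fin n) (Fin k) ℝ) :
    twoInf (B₁ * B₂) ≤ rowSumNorm B₁ * twoInf B₂ := by
  rcases Nat.eq_zero_or_pos n with hn | hn
  · subst hn
    simp [twoInf, rowSumNorm, Real.iSup_of_isEmpty]
  have : Nonempty (Fin n) := ⟨⟨0, hn⟩⟩
  -- nonnegativity of twoInf B₂
  have htwoInf_nonneg : 0 ≤ twoInf B₂ :=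
    le_ciSup_of_le (Set.Finite.bddAbove (Set.finite_range _)) (Classical.arbitrary _)
      (rnorm_nonneg' _)
  have hrow : ∀ l, rnorm (B₂ l) ≤ twoInf B₂ := fun l =>
    le_ciSup (f := fun l => rnorm (B₂ l)) (Set.Finite.bddAbove (Set.finite_range _)) l
  have hrs : ∀ i, (∑ j, |B₁ i j|) ≤ rowSumNorm B₁ := fun i =>
    le_ciSup (f := fun i => ∑ j, |B₁ i j|) (Set.Finite.bddAbove (Set.finite_range _)) i
  apply ciSup_le
  intro i
  -- row i of B₁ * B₂ as a vector in EuclideanSpace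
  set x : Fin n → EuclideanSpace ℝ (Fin k) :=
    fun l => (WithLp.equiv 2 (Fin k → ℝ)).symm (B₂ l) with hx
  have hrowEq : (WithLp.equiv 2 (Fin k → ℝ)).symm ((B₁ * B₂) i) = ∑ l, B₁ i l • x l := by
    have h1 : (B₁ * B₂) i = ∑ l, B₁ i l • B₂ l := by
      funext j; simp [Matrix.mul_apply, Finset.sum_apply]
    rw [h1]
    show (WithLp.linearEquiv 2 ℝ (Fin k → ℝ)).symm (∑ l, B₁ i l • B₂ l) = _
    rw [map_sum]
    simp [x]
  calc rnorm ((B₁ * B₂) i) = ‖∑ l, B₁ i l • x l‖ := by rw [rnorm_eq', hrowEq]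
    _ ≤ ∑ l, ‖B₁ i l • x l‖ := norm_sum_le _ _
    _ = ∑ l, |B₁ i l| * rnorm (B₂ l) := by
        simp [norm_smul, Real.norm_eq_abs, rnorm_eq', x]
    _ ≤ ∑ l, |B₁ i l| * twoInf B₂ := by
        apply Finset.sum_le_sum
        intro l _
        exact mul_le_mul_of_nonneg_left (hrow l) (abs_nonneg _)
    _ = (∑ l, |B₁ i l|) * twoInf B₂ := by rw [Finset.sum_mul]
    _ ≤ rowSumNorm B₁ * twoInf B₂ :=
        mul_le_mul_of_nonneg_right (hrs i) htwoInf_nonneg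
end

section
/- Let D₁ ∈ ℝ^{ℓ×ℓ} and D₂ ∈ ℝ^{m×m} be diagonal matrices with λ_min(D₁) ≥ λ_max(D₂). Then sep_2(D₁, D₂) := inf{‖ZD₁ − D₂Z‖_2 : Z ∈ ℝ^{m×ℓ}, ‖Z‖_2 = 1} equals λ_min(D₁) − λ_max(D₂), where ‖·‖_2 is the spectral norm. -/
open Matrix
open scoped RealInnerProductSpace

lemma diag_mulVec {n : ℕ} {D : Matrix (Fin n) (Fin n) ℝ} (hD : D.IsDiag)
    (x : Fin n → ℝ) (i : Fin n) : D.mulVec x i = D i i * x i := by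
  unfold Matrix.mulVec dotProduct
  rw [Finset.sum_eq_single i (fun k _ hk => by show D i k * x k = 0; rw [hD (Ne.symm hk), zero_mul]) (by simp)]

lemma abs_apply_le {k : ℕ} (x : EuclideanSpace ℝ (Fin k)) (i : Fin k) : |x i| ≤ ‖x‖ := by
  rw [EuclideanSpace.norm_eq, ← Real.sqrt_sq_eq_abs]
  apply Real.sqrt_le_sqrt
  calc x i ^ 2 ≤ ∑ j, x j ^2 :=
        Finset.single_le_sum (f := fun j => x j ^2) (fun j _ => sq_nonneg _) (Finset.mem_univ i)
    _ = _ := by simp [sq_abs, Real.norm_eq_abs]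

lemma specNorm_smul {m n : ℕ} (c : ℝ) (B : Matrix (Fin m) (Fin n) ℝ) :
    specNorm (c • B) = |c| * specNorm B := by
  unfold specNorm
  rw [_root_.map_smul]
  rw [show ((c • Matrix.toEuclideanLin B).toContinuousLinearMap)
      = c • ((Matrix.toEuclideanLin B).toContinuousLinearMap) from rfl]
  rw [norm_smul c ((Matrix.toEuclideanLin B).toContinuousLinearMap), Real.norm_eq_abs]

lemma specNorm_stdBasis {m l : ℕ} (j₀ : Fin m) (i₀ : Fin l) :
    specNorm (Matrix.single j₀ i₀ (1:ℝ)) = 1 := by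
  set Z := Matrix.single j₀ i₀ (1:ℝ)
  set L := (Matrix.toEuclideanLin Z).toContinuousLinearMap
  have happ : ∀ x : EuclideanSpace ℝ (Fin l), L x = EuclideanSpace.single j₀ (x i₀) := by
    intro x
    ext j
    show Z.mulVec x j = _
    unfold Matrix.mulVec dotProduct
    simp [Z, Matrix.single, EuclideanSpace.single, ite_and]
    by_cases h : j = j₀
    · simp [h, Pi.single, Function.update]
    · simp [h, Pi.single, Function.update, Ne.symm h]
  apply le_antisymm
  · apply ContinuousLinearMap.opNorm_le_bound _ zero_le_one
    intro x
    rw [happ x, EuclideanSpace.norm_single, one_mul, Real.norm_eq_abs]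
    exact abs_apply_le x i₀
  · have h1 : ‖L (EuclideanSpace.single i₀ (1:ℝ))‖ = 1 := by
      rw [happ, EuclideanSpace.single_apply]
      simp
    have := L.le_opNorm (EuclideanSpace.single i₀ (1:ℝ))
    rw [h1, EuclideanSpace.norm_single] at this
    simp only [norm_one, mul_one] at this
    exact this

lemma stdBasis_comm {l m : ℕ} (D₁ : Matrix (Fin l) (Fin l) ℝ) (D₂ : Matrix (Fin m) (Fin m) ℝ)
    (hD₁ : D₁.IsDiag) (hD₂ : D₂.IsDiag) (j₀ : Fin m) (i₀ : Fin l) :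
    Matrix.single j₀ i₀ (1:ℝ) * D₁ - D₂ * Matrix.single j₀ i₀ (1:ℝ)
      = (D₁ i₀ i₀ - D₂ j₀ j₀) • Matrix.single j₀ i₀ (1:ℝ) := by
  ext j i
  simp only [Matrix.sub_apply, Matrix.smul_apply, Matrix.mul_apply, Matrix.single,
    Matrix.of_apply, ite_mul, mul_ite, one_mul, mul_one, zero_mul, mul_zero, smul_eq_mul]
  by_cases hj : j₀ = j <;> by_cases hi : i₀ = i
  · subst hj; subst hi; simp [Finset.sum_ite_eq]
  · subst hj; simp [hi, Finset.sum_ite_eq, hD₁ hi]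
  · subst hi; simp [hj, Finset.sum_ite_eq, hD₂ (fun h => hj h.symm)]
  · simp [hj, hi]

set_option maxHeartbeats 2000000 in
lemma lower_bound {l m : ℕ} [NeZero l] [NeZero m]
    (D₁ : Matrix (Fin l) (Fin l) ℝ) (D₂ : Matrix (Fin m) (Fin m) ℝ)
    (hD₁ : D₁.IsDiag) (hD₂ : D₂.IsDiag)
    (Z : Matrix (Fin m) (Fin l) ℝ) (hZ : specNorm Z = 1) :
    (⨅ i, D₁ i i) - (⨆ j, D₂ j j) ≤ specNorm (Z * D₁ - D₂ * Z) := by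
  haveI : Nonempty (Fin l) := Fin.pos_iff_nonempty.mp (Nat.pos_of_ne_zero (NeZero.ne l))
  haveI : Nonempty (Fin m) := Fin.pos_iff_nonempty.mp (Nat.pos_of_ne_zero (NeZero.ne m))
  set L := (Matrix.toEuclideanLin Z).toContinuousLinearMap with hL
  -- attain the norm on the unit sphere
  have hsph : (Metric.sphere (0 : EuclideanSpace ℝ (Fin l)) 1).Nonempty :=
    NormedSpace.sphere_nonempty.mpr zero_le_one
  obtain ⟨v, hvS, hvmax⟩ := (isCompact_sphere (0 : EuclideanSpace ℝ (Fin l)) 1).exists_isMaxOn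
    hsph (Continuous.continuousOn (by continuity : Continuous fun x => ‖L x‖))
  have hv1 : ‖v‖ = 1 := by simpa using mem_sphere_zero_iff_norm.mp hvS
  have hLnorm : ‖L‖ = 1 := hZ
  have hLv : ‖L v‖ = 1 := by
    apply le_antisymm
    · calc ‖L v‖ ≤ ‖L‖ * ‖v‖ := L.le_opNorm v
        _ = 1 := by rw [hLnorm, hv1, mul_one]
    · have : ‖L‖ ≤ ‖L v‖ := by
        apply ContinuousLinearMap.opNorm_le_bound _ (norm_nonneg _)
        intro x
        rcases eq_or_ne x 0 with rfl | hx
        · simp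
        · have hxS : (‖x‖⁻¹ • x) ∈ Metric.sphere (0 : EuclideanSpace ℝ (Fin l)) 1 := by
            simp [norm_smul, inv_mul_cancel₀ (norm_ne_zero_iff.mpr hx)]
          have := hvmax hxS
          simp only [Set.mem_setOf_eq, _root_.map_smul, norm_smul, norm_inv, norm_norm] at this
          have hxpos : (0:ℝ) < ‖x‖ := norm_pos_iff.mpr hx
          calc ‖L x‖ = ‖x‖ * (‖x‖⁻¹ * ‖L x‖) := by field_simp
            _ ≤ ‖x‖ * ‖L v‖ := by
                apply mul_le_mul_of_nonneg_left _ (norm_nonneg x)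
                simpa using this
            _ = ‖L v‖ * ‖x‖ := mul_comm _ _
      rw [hLnorm] at this; exact this
  set u := L v with hu
  -- adjoint maps u back to v
  have hadj : ContinuousLinearMap.adjoint L u = v := by
    set w := ContinuousLinearMap.adjoint L u with hw
    have hwn : ‖w‖ ≤ 1 := by
      calc ‖w‖ ≤ ‖ContinuousLinearMap.adjoint L‖ * ‖u‖ := (ContinuousLinearMap.adjoint L).le_opNorm u
        _ = 1 := by
            rw [LinearIsometryEquiv.norm_map ContinuousLinearMap.adjoint L, hLnorm, hLv, mul_one]
    have hinner : ⟪w, v⟫ = 1 := by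
      rw [hw, ContinuousLinearMap.adjoint_inner_left]
      have := real_inner_self_eq_norm_sq u
      rw [hLv] at this
      rw [← hu, this, one_pow]
    have : ‖w - v‖ ^ 2 ≤ 0 := by
      rw [norm_sub_sq_real, hinner, hv1]
      nlinarith [hwn, norm_nonneg w]
    have : w - v = 0 := by
      have := le_antisymm this (sq_nonneg _)
      simpa [pow_eq_zero_iff] using this
    exact sub_eq_zero.mp this
  -- now the inner product estimate
  set M := Z * D₁ - D₂ * Z with hM
  set LM := (Matrix.toEuclideanLin M).toContinuousLinearMap with hLM
  set x₁ : EuclideanSpace ℝ (Fin l) := WithLp.toLp 2 (D₁.mulVec v) with hx₁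
  have hZv : Z.mulVec (v : Fin l → ℝ) = u := rfl
  have hMv : ∀ j, (LM v) j = (L x₁) j - D₂.mulVec u j := by
    intro j
    show M.mulVec v j = Z.mulVec x₁ j - D₂.mulVec u j
    rw [hM, Matrix.sub_mulVec, ← Matrix.mulVec_mulVec, ← Matrix.mulVec_mulVec, hZv]
    rfl
  have hvsum : ∑ i, v i * v i = 1 := by
    have := real_inner_self_eq_norm_sq v
    rw [hv1, PiLp.inner_apply] at this
    simpa only [RCLike.inner_apply, conj_trivial, one_pow] using this
  have husum : ∑ j, u j * u j = 1 := by
    have := real_inner_self_eq_norm_sq u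
    rw [hLv, PiLp.inner_apply] at this
    simpa only [RCLike.inner_apply, conj_trivial, one_pow] using this
  have hbddD₁ : BddBelow (Set.range fun i => D₁ i i) := Set.Finite.bddBelow (Set.finite_range _)
  have hbddD₂ : BddAbove (Set.range fun j => D₂ j j) := Set.Finite.bddAbove (Set.finite_range _)
  have hterm1 : (⨅ i, D₁ i i) ≤ ⟪u, L x₁⟫ := by
    rw [← ContinuousLinearMap.adjoint_inner_left, hadj, PiLp.inner_apply]
    have : ∀ i, v i * x₁ i = D₁ i i * (v i * v i) := by
      intro i
      show v i * D₁.mulVec v i = _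
      rw [diag_mulVec hD₁]
      ring
    calc (⨅ i, D₁ i i) = ∑ i, (⨅ i', D₁ i' i') * (v i * v i) := by
          rw [← Finset.mul_sum, hvsum, mul_one]
      _ ≤ ∑ i, D₁ i i * (v i * v i) := by
          apply Finset.sum_le_sum
          intro i _
          exact mul_le_mul_of_nonneg_right (ciInf_le hbddD₁ i) (mul_self_nonneg _)
      _ = ∑ i, (v i : ℝ) * x₁ i := by
          apply Finset.sum_congr rfl
          intro i _
          rw [this i]
      _ = _ := by simp [RCLike.inner_apply, conj_trivial, mul_comm]
  have hterm2 : ⟪u, (WithLp.toLp 2 (fun j => D₂.mulVec u j) : EuclideanSpace ℝ (Fin m))⟫ ≤ ⨆ j, D₂ j j := by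
    rw [PiLp.inner_apply]
    calc ∑ j, D₂.mulVec u j * (starRingEnd ℝ) (u j) = ∑ j, D₂ j j * (u j * u j) := by
          apply Finset.sum_congr rfl
          intro j _
          rw [diag_mulVec hD₂]
          simp [conj_trivial]
          ring
      _ ≤ ∑ j, (⨆ j', D₂ j' j') * (u j * u j) := by
          apply Finset.sum_le_sum
          intro j _
          exact mul_le_mul_of_nonneg_right (le_ciSup hbddD₂ j) (mul_self_nonneg _)
      _ = ⨆ j, D₂ j j := by rw [← Finset.mul_sum, husum, mul_one]
  have hinnerM : (⨅ i, D₁ i i) - (⨆ j, D₂ j j) ≤ ⟪u, LM v⟫ := by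
    have : ⟪u, LM v⟫ = ⟪u, L x₁⟫ - ⟪u, (WithLp.toLp 2 (fun j => D₂.mulVec u j) : EuclideanSpace ℝ (Fin m))⟫ := by
      simp only [PiLp.inner_apply, RCLike.inner_apply, conj_trivial]
      rw [← Finset.sum_sub_distrib]
      apply Finset.sum_congr rfl
      intro j _
      rw [hMv j, WithLp.ofLp_toLp]
      ring
    rw [this]
    exact sub_le_sub hterm1 hterm2
  calc (⨅ i, D₁ i i) - (⨆ j, D₂ j j) ≤ ⟪u, LM v⟫ := hinnerM
    _ ≤ ‖u‖ * ‖LM v‖ := real_inner_le_norm u (LM v)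
    _ ≤ ‖u‖ * (‖LM‖ * ‖v‖) := by
        apply mul_le_mul_of_nonneg_left (LM.le_opNorm v) (norm_nonneg u)
    _ = specNorm M := by rw [hLv, hv1, one_mul, mul_one]; rfl

theorem stmt6 {l m : ℕ} [NeZero l] [NeZero m]
    (D₁ : Matrix (Fin l) (Fin l) ℝ) (D₂ : Matrix (Fin m) (Fin m) ℝ)
    (hD₁ : D₁.IsDiag) (hD₂ : D₂.IsDiag)
    (hgap : (⨆ j, D₂ j j) ≤ ⨅ i, D₁ i i) :
    sInf {r : ℝ | ∃ Z : Matrix (Fin m) (Fin l) ℝ, specNorm Z = 1 ∧ r = specNorm (Z * D₁ - D₂ * Z)} =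
      (⨅ i, D₁ i i) - (⨆ j, D₂ j j) := by
  haveI : Nonempty (Fin l) := Fin.pos_iff_nonempty.mp (Nat.pos_of_ne_zero (NeZero.ne l))
  haveI : Nonempty (Fin m) := Fin.pos_iff_nonempty.mp (Nat.pos_of_ne_zero (NeZero.ne m))
  obtain ⟨i₀, hi₀⟩ := exists_eq_ciInf_of_finite (f := fun i => D₁ i i)
  obtain ⟨j₀, hj₀⟩ := exists_eq_ciSup_of_finite (f := fun j => D₂ j j)
  have hge : (0:ℝ) ≤ (⨅ i, D₁ i i) - (⨆ j, D₂ j j) := sub_nonneg.mpr hgap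
  have hmem : ((⨅ i, D₁ i i) - (⨆ j, D₂ j j)) ∈
      {r : ℝ | ∃ Z : Matrix (Fin m) (Fin l) ℝ, specNorm Z = 1 ∧ r = specNorm (Z * D₁ - D₂ * Z)} := by
    refine ⟨Matrix.single j₀ i₀ 1, specNorm_stdBasis j₀ i₀, ?_⟩
    rw [stdBasis_comm D₁ D₂ hD₁ hD₂ j₀ i₀, specNorm_smul, specNorm_stdBasis, mul_one,
      hi₀, hj₀, abs_of_nonneg hge]
  apply le_antisymm
  · apply csInf_le _ hmem
    refine ⟨(⨅ i, D₁ i i) - (⨆ j, D₂ j j), ?_⟩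
    rintro r ⟨Z, hZ, rfl⟩
    exact lower_bound D₁ D₂ hD₁ hD₂ Z hZ
  · apply le_csInf ⟨_, hmem⟩
    rintro r ⟨Z, hZ, rfl⟩
    exact lower_bound D₁ D₂ hD₁ hD₂ Z hZ
end

section
/- Let D₁ ∈ ℝ^{ℓ×ℓ} and D₂ ∈ ℝ^{m×m} be diagonal matrices with λ_min(D₁) ≥ λ_max(D₂). Then sep_{2,∞}(D₁, D₂) := inf{‖ZD₁ − D₂Z‖_{2,∞} : Z ∈ ℝ^{m×ℓ}, ‖Z‖_{2,∞} = 1} equals λ_min(D₁) − λ_max(D₂). -/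
open Matrix

lemma exists_sup' {n : ℕ} [NeZero n] (f : Fin n → ℝ) :
    ∃ i, (⨆ j, f j) = f i := by
  obtain ⟨i, hi⟩ := Finite.exists_max f
  exact ⟨i, le_antisymm (ciSup_le hi) (le_ciSup (Set.finite_range f).bddAbove i)⟩

lemma exists_inf' {n : ℕ} [NeZero n] (f : Fin n → ℝ) :
    ∃ i, (⨅ j, f j) = f i := by
  obtain ⟨i, hi⟩ := Finite.exists_min f
  exact ⟨i, le_antisymm (ciInf_le (Set.finite_range f).bddBelow i) (le_ciInf hi)⟩

lemma entry_eq {l m : ℕ} (D₁ : Matrix (Fin l) (Fin l) ℝ) (D₂ : Matrix (Fin m) (Fin m) ℝ)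
    (hD₁ : D₁.IsDiag) (hD₂ : D₂.IsDiag) (Z : Matrix (Fin m) (Fin l) ℝ) (i : Fin m) (j : Fin l) :
    (Z * D₁ - D₂ * Z) i j = (D₁ j j - D₂ i i) * Z i j := by
  simp only [Matrix.sub_apply, Matrix.mul_apply]
  rw [Finset.sum_eq_single j (fun k _ hk => by rw [hD₁ hk, mul_zero]) (by simp),
    Finset.sum_eq_single i (fun k _ hk => by rw [hD₂ hk.symm, zero_mul]) (by simp)]
  ring

lemma rnorm_single {k : ℕ} (j₀ : Fin k) (c : ℝ) (hc : 0 ≤ c) :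
    rnorm (fun q => if q = j₀ then c else 0) = c := by
  unfold rnorm
  rw [Finset.sum_eq_single j₀ (fun b _ hb => by simp [hb]) (by simp)]
  simp [Real.sqrt_sq hc]

lemma rnorm_zero {k : ℕ} : rnorm (fun _ : Fin k => (0:ℝ)) = 0 := by
  simp [rnorm]

theorem stmt7 {l m : ℕ} [NeZero l] [NeZero m]
    (D₁ : Matrix (Fin l) (Fin l) ℝ) (D₂ : Matrix (Fin m) (Fin m) ℝ)
    (hD₁ : D₁.IsDiag) (hD₂ : D₂.IsDiag)
    (hgap : (⨆ j, D₂ j j) ≤ ⨅ i, D₁ i i) :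
    sInf {r : ℝ | ∃ Z : Matrix (Fin m) (Fin l) ℝ, twoInf Z = 1 ∧ r = twoInf (Z * D₁ - D₂ * Z)} =
      (⨅ i, D₁ i i) - (⨆ j, D₂ j j) := by
  set a := ⨅ i, D₁ i i with ha
  set b := ⨆ j, D₂ j j with hb
  have hg : 0 ≤ a - b := sub_nonneg.mpr hgap
  -- lower bound
  have hlow : ∀ r ∈ {r : ℝ | ∃ Z : Matrix (Fin m) (Fin l) ℝ,
      twoInf Z = 1 ∧ r = twoInf (Z * D₁ - D₂ * Z)}, a - b ≤ r := by
    rintro r ⟨Z, hZ, rfl⟩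
    obtain ⟨i, hi⟩ := exists_sup' (fun i => rnorm (Z i))
    have hrow : rnorm (Z i) = 1 := by rw [twoInf] at hZ; rw [← hi, hZ]
    have key : a - b ≤ rnorm ((Z * D₁ - D₂ * Z) i) := by
      have hsum : (a - b)^2 * ∑ j, Z i j ^ 2 ≤ ∑ j, ((Z * D₁ - D₂ * Z) i j)^2 := by
        rw [Finset.mul_sum]
        refine Finset.sum_le_sum fun j _ => ?_
        rw [entry_eq D₁ D₂ hD₁ hD₂, mul_pow]
        have hd : a - b ≤ D₁ j j - D₂ i i :=
          sub_le_sub (ciInf_le (Set.finite_range _).bddBelow j)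
            (le_ciSup (f := fun j => D₂ j j) (Set.finite_range _).bddAbove i)
        have : (a - b)^2 ≤ (D₁ j j - D₂ i i)^2 := by
          apply pow_le_pow_left₀ hg hd
        nlinarith [sq_nonneg (Z i j)]
      calc a - b = Real.sqrt ((a - b)^2 * ∑ j, Z i j ^ 2) := by
              rw [rnorm] at hrow
              rw [Real.sqrt_mul (sq_nonneg _), Real.sqrt_sq hg, hrow, mul_one]
        _ ≤ rnorm ((Z * D₁ - D₂ * Z) i) := Real.sqrt_le_sqrt hsum
    refine key.trans ?_
    rw [twoInf]
    exact le_ciSup (f := fun p => rnorm ((Z * D₁ - D₂ * Z) p)) (Set.finite_range _).bddAbove i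
  -- witness
  obtain ⟨j₀, hj₀⟩ := exists_inf' (fun i => D₁ i i)
  obtain ⟨i₀, hi₀⟩ := exists_sup' (fun j => D₂ j j)
  set Z : Matrix (Fin m) (Fin l) ℝ := fun p q => if p = i₀ ∧ q = j₀ then 1 else 0 with hZdef
  have hrowZ : ∀ p, rnorm (Z p) = if p = i₀ then 1 else 0 := by
    intro p
    by_cases hp : p = i₀
    · subst hp
      simp only [if_pos rfl]
      have : Z p = fun q => if q = j₀ then 1 else 0 := by
        funext q; simp [hZdef]
      rw [this, rnorm_single _ _ zero_le_one]
      simp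
    · simp only [if_neg hp]
      have : Z p = fun _ => 0 := by funext q; simp [hZdef, hp]
      rw [this, rnorm_zero]
  have htwoZ : twoInf Z = 1 := by
    apply le_antisymm
    · apply ciSup_le
      intro p; rw [hrowZ p]; split <;> norm_num
    · calc (1:ℝ) = rnorm (Z i₀) := by rw [hrowZ i₀]; simp
        _ ≤ _ := by
          rw [twoInf]
          exact le_ciSup (f := fun p => rnorm (Z p)) (Set.finite_range _).bddAbove i₀
  have hrowW : ∀ p, rnorm ((Z * D₁ - D₂ * Z) p) = if p = i₀ then a - b else 0 := by
    intro p
    have hW : ∀ q, (Z * D₁ - D₂ * Z) p q =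
        if p = i₀ ∧ q = j₀ then a - b else 0 := by
      intro q
      rw [entry_eq D₁ D₂ hD₁ hD₂]
      by_cases h : p = i₀ ∧ q = j₀
      · obtain ⟨h1, h2⟩ := h
        simp [hZdef, h1, h2, ← hj₀, ← hi₀]
        rfl
      · simp [hZdef, h]
    by_cases hp : p = i₀
    · subst hp
      simp only [if_pos rfl]
      have : (Z * D₁ - D₂ * Z) p = fun q => if q = j₀ then a - b else 0 := by
        funext q; rw [hW q]; simp
      rw [this, rnorm_single _ _ hg]
      simp
    · simp only [if_neg hp]
      have : (Z * D₁ - D₂ * Z) p = fun _ => 0 := by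
        funext q; rw [hW q]; simp [hp]
      rw [this, rnorm_zero]
  have htwoW : twoInf (Z * D₁ - D₂ * Z) = a - b := by
    apply le_antisymm
    · apply ciSup_le
      intro p; rw [hrowW p]; split
      · exact le_rfl
      · exact hg
    · calc a - b = rnorm ((Z * D₁ - D₂ * Z) i₀) := by rw [hrowW i₀]; simp
        _ ≤ _ := by
          rw [twoInf]
          exact le_ciSup (f := fun p => rnorm ((Z * D₁ - D₂ * Z) p)) (Set.finite_range _).bddAbove i₀
  have hmem : a - b ∈ {r : ℝ | ∃ Z : Matrix (Fin m) (Fin l) ℝ,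
      twoInf Z = 1 ∧ r = twoInf (Z * D₁ - D₂ * Z)} := ⟨Z, htwoZ, htwoW.symm⟩
  exact le_antisymm (csInf_le ⟨a - b, hlow⟩ hmem) (le_csInf ⟨_, hmem⟩ hlow)
end

section
/- Let V₁ ∈ ℝ^{n×r} and V₂ ∈ ℝ^{n×(n−r)} have orthonormal columns with V₁^T V₂ = 0, let Λ₁, Λ₂ be diagonal, let A = V₁Λ₁V₁^T + V₂Λ₂V₂^T, let E be symmetric, and let Â = A + E. Suppose X̂ ∈ ℝ^{(n−r)×r} satisfies 0 = −Â₂₁ + X̂Â₁₁ − Â₂₂X̂ + X̂Â₁₂X̂ where Âᵢⱼ = Vᵢ^T Â Vⱼ. Define V̂₁ = (V₁ + V₂X̂)(I + X̂^TX̂)^{−1/2}. Then V̂₁^T Â V̂₁ is similar to Â₁₁ + Â₁₂X̂, i.e., V̂₁^T Â V̂₁ = (I + X̂^TX̂)^{1/2}(Â₁₁ + Â₁₂X̂)(I + X̂^TX̂)^{−1/2}. -/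
open Matrix

/-- the old `Matrix.PosSemidef.sqrt` (removed from Mathlib), with its old definition -/
noncomputable def posSemidefSqrt {m : Type*} [Fintype m] [DecidableEq m] {A : Matrix m m ℝ}
    (hA : A.PosSemidef) : Matrix m m ℝ :=
  hA.1.eigenvectorUnitary.1 * diagonal ((↑) ∘ (√·) ∘ hA.1.eigenvalues) *
    (star hA.1.eigenvectorUnitary : Matrix m m ℝ)
theorem posSemidefSqrt_mul_self {m : Type*} [Fintype m] [DecidableEq m] {A : Matrix m m ℝ}
    (hA : A.PosSemidef) : posSemidefSqrt hA * posSemidefSqrt hA = A := by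
  unfold posSemidefSqrt
  have hU : (star hA.1.eigenvectorUnitary : Matrix m m ℝ) * hA.1.eigenvectorUnitary.1 = 1 :=
    Unitary.coe_star_mul_self _
  have hD : diagonal ((↑) ∘ (√·) ∘ hA.1.eigenvalues) * diagonal ((↑) ∘ (√·) ∘ hA.1.eigenvalues)
      = diagonal (RCLike.ofReal ∘ hA.1.eigenvalues : m → ℝ) := by
    rw [diagonal_mul_diagonal]
    congr 1
    funext i
    simp [Real.mul_self_sqrt (hA.eigenvalues_nonneg i)]
  conv_rhs => rw [hA.1.spectral_theorem, Unitary.conjStarAlgAut_apply]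
  calc _ = hA.1.eigenvectorUnitary.1 * diagonal ((↑) ∘ (√·) ∘ hA.1.eigenvalues) *
        ((star hA.1.eigenvectorUnitary : Matrix m m ℝ) * hA.1.eigenvectorUnitary.1) *
        diagonal ((↑) ∘ (√·) ∘ hA.1.eigenvalues) * (star hA.1.eigenvectorUnitary : Matrix m m ℝ) := by
          simp only [Matrix.mul_assoc]
    _ = _ := by
          rw [hU, Matrix.mul_one, Matrix.mul_assoc _ (diagonal _) (diagonal _), hD]

theorem posSemidefSqrt_isHermitian {m : Type*} [Fintype m] [DecidableEq m] {A : Matrix m m ℝ}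
    (hA : A.PosSemidef) : (posSemidefSqrt hA).IsHermitian := by
  unfold posSemidefSqrt Matrix.IsHermitian
  simp only [Matrix.conjTranspose_mul, star_eq_conjTranspose, conjTranspose_conjTranspose,
    diagonal_conjTranspose, Matrix.mul_assoc, star_trivial]
theorem stmt19 {n r : ℕ} (V₁ : Matrix (Fin n) (Fin r) ℝ) (V₂ : Matrix (Fin n) (Fin (n - r)) ℝ)
    (hV₁ : V₁ᵀ * V₁ = 1) (hV₂ : V₂ᵀ * V₂ = 1) (hV₁₂ : V₁ᵀ * V₂ = 0)
    (Λ₁ : Matrix (Fin r) (Fin r) ℝ) (Λ₂ : Matrix (Fin (n - r)) (Fin (n - r)) ℝ)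
    (hΛ₁ : Λ₁.IsDiag) (hΛ₂ : Λ₂.IsDiag)
    (E : Matrix (Fin n) (Fin n) ℝ) (hE : Eᵀ = E)
    (Ah : Matrix (Fin n) (Fin n) ℝ) (hAh : Ah = V₁ * Λ₁ * V₁ᵀ + V₂ * Λ₂ * V₂ᵀ + E)
    (X : Matrix (Fin (n - r)) (Fin r) ℝ)
    (hX : 0 = -(V₂ᵀ * Ah * V₁) + X * (V₁ᵀ * Ah * V₁) - (V₂ᵀ * Ah * V₂) * X +
        X * (V₁ᵀ * Ah * V₂) * X)
    (S : Matrix (Fin r) (Fin r) ℝ)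
    (hS : S = posSemidefSqrt (Matrix.PosSemidef.add Matrix.PosSemidef.one
        (Matrix.posSemidef_conjTranspose_mul_self X))) :
    ((V₁ + V₂ * X) * S⁻¹)ᵀ * Ah * ((V₁ + V₂ * X) * S⁻¹) =
      S * (V₁ᵀ * Ah * V₁ + V₁ᵀ * Ah * V₂ * X) * S⁻¹ := by
  set P := Matrix.PosSemidef.add (Matrix.PosSemidef.one
      (R := ℝ) (n := Fin r)) (Matrix.posSemidef_conjTranspose_mul_self X) with hP
  have hSS : S * S = 1 + Xᴴ * X := by rw [hS]; exact posSemidefSqrt_mul_self P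
  have hXH : Xᴴ = Xᵀ := Matrix.conjTranspose_eq_transpose_of_trivial X
  have hSt : Sᵀ = S := by
    have h := posSemidefSqrt_isHermitian P
    rw [Matrix.IsHermitian, Matrix.conjTranspose_eq_transpose_of_trivial] at h
    rw [hS]; exact h
  -- S invertible
  have hPD : (1 + Xᴴ * X).PosDef :=
    Matrix.PosDef.add_posSemidef Matrix.PosDef.one (Matrix.posSemidef_conjTranspose_mul_self X)
  have hdetM : (1 + Xᴴ * X).det ≠ 0 := ne_of_gt hPD.det_pos
  have hdetS : S.det ≠ 0 := by
    intro h
    apply hdetM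
    rw [← hSS, Matrix.det_mul, h, mul_zero]
  have hSinv : S⁻¹ * S = 1 := Matrix.nonsing_inv_mul S hdetS.isUnit
  have hSinv' : S * S⁻¹ = 1 := Matrix.mul_nonsing_inv S hdetS.isUnit
  -- the key algebraic identity
  have hA21 : V₂ᵀ * Ah * V₁ = X * (V₁ᵀ * Ah * V₁) - (V₂ᵀ * Ah * V₂) * X +
      X * (V₁ᵀ * Ah * V₂) * X := by
    have := hX
    linear_combination (norm := noncomm_ring) this
  have core : (V₁ + V₂ * X)ᵀ * Ah * (V₁ + V₂ * X) =
      (1 + Xᵀ * X) * (V₁ᵀ * Ah * V₁ + V₁ᵀ * Ah * V₂ * X) := by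
    have expand : (V₁ + V₂ * X)ᵀ * Ah * (V₁ + V₂ * X) =
        V₁ᵀ * Ah * V₁ + V₁ᵀ * Ah * V₂ * X + Xᵀ * (V₂ᵀ * Ah * V₁) +
          Xᵀ * (V₂ᵀ * Ah * V₂) * X := by
      simp only [Matrix.transpose_add, Matrix.transpose_mul, Matrix.add_mul,
        Matrix.mul_add, Matrix.mul_assoc]
      abel
    rw [expand, hA21]
    simp only [Matrix.add_mul, Matrix.mul_add, Matrix.mul_sub, Matrix.sub_mul,
      Matrix.one_mul, Matrix.mul_assoc]
    abel
  have hTinv : (S⁻¹)ᵀ = S⁻¹ := by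
    rw [Matrix.transpose_nonsing_inv, hSt]
  calc ((V₁ + V₂ * X) * S⁻¹)ᵀ * Ah * ((V₁ + V₂ * X) * S⁻¹)
      = S⁻¹ * ((V₁ + V₂ * X)ᵀ * Ah * (V₁ + V₂ * X)) * S⁻¹ := by
        simp only [Matrix.transpose_mul, hTinv, Matrix.mul_assoc]
    _ = S⁻¹ * ((S * S) * (V₁ᵀ * Ah * V₁ + V₁ᵀ * Ah * V₂ * X)) * S⁻¹ := by
        rw [core, hSS, hXH]
    _ = S * (V₁ᵀ * Ah * V₁ + V₁ᵀ * Ah * V₂ * X) * S⁻¹ := by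
        simp only [← Matrix.mul_assoc]
        rw [hSinv, Matrix.one_mul]
end
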